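/- Let H be a complex Hilbert space and let u, c ∈ B(H) with u positive and having trivial kernel, and c self-adjoint. If the spectrum of c²u contains no strictly positive real number, then c = 0. Consequently, if u and c are as above and uc + cu = 0, then c = 0. -/

import Mathlib

set_option maxHeartbeats 1000000 in
set_option synthInstance.maxHeartbeats 200000 in

/-- Let `u, c ∈ B(H)` with `u` positive with trivial kernel and `c` self-adjoint.
If the spectrum of `c²u` contains no strictly positive real number, then `c = 0`;
consequently if `uc + cu = 0` then `c = 0`. -/
theorem selfadjoint_eq_zero_of_spectrum_or_anticommute
    {H : Type*} [NormedAddCommGroup H] [InnerProductSpace ℂ H] [CompleteSpace H]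
    (u c : H →L[ℂ] H) (hu : u.IsPositive) (huker : ∀ ξ : H, u ξ = 0 → ξ = 0)
    (hc : IsSelfAdjoint c) :
    ((∀ t : ℝ, 0 < t → (t : ℂ) ∉ spectrum ℂ (c * c * u)) → c = 0) ∧
    (u * c + c * u = 0 → c = 0) := by
  -- `c * u * c` is a positive operator
  have hpos : (c * u * c).IsPositive := by
    have h1 := hu.conj_adjoint c
    rw [hc.adjoint_eq] at h1
    simpa [ContinuousLinearMap.mul_def, ContinuousLinearMap.comp_assoc] using h1
  have hle : (0 : H →L[ℂ] H) ≤ c * u * c :=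
    (ContinuousLinearMap.nonneg_iff_isPositive _).mpr hpos
  have hsa : IsSelfAdjoint (c * u * c) := hpos.isSelfAdjoint
  -- key step: if `c * u * c = 0` then `c = 0`
  have hker : c * u * c = 0 → c = 0 := by
    intro h0
    set s := CFC.sqrt u with hs
    have hu0 : (0 : H →L[ℂ] H) ≤ u := (ContinuousLinearMap.nonneg_iff_isPositive _).mpr hu
    have hs0 : (0 : H →L[ℂ] H) ≤ s := CFC.sqrt_nonneg u
    have hss : s * s = u := CFC.sqrt_mul_sqrt_self u hu0
    have hssa : IsSelfAdjoint s := IsSelfAdjoint.of_nonneg hs0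
    have hsc : s * c = 0 := by
      rw [← CStarRing.star_mul_self_eq_zero_iff (s * c)]
      calc star (s * c) * (s * c) = c * (s * s) * c := by
            rw [star_mul, hssa.star_eq, hc.star_eq]; noncomm_ring
        _ = 0 := by rw [hss, h0]
      -- done
    have huc : u * c = 0 := by
      calc u * c = s * (s * c) := by rw [← mul_assoc, hss]
        _ = 0 := by rw [hsc, mul_zero]
    ext x
    have : u (c x) = 0 := by
      have := congrArg (fun f : H →L[ℂ] H => f x) huc
      simpa [ContinuousLinearMap.mul_apply] using this
    simpa using huker (c x) this
  -- main statement: spectrum condition implies `c = 0`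
  have main : (∀ t : ℝ, 0 < t → (t : ℂ) ∉ spectrum ℂ (c * c * u)) → c = 0 := by
    intro hspec
    apply hker
    -- the real spectrum of `c * u * c` is `{0}`-contained
    have hsub : spectrum ℂ (c * u * c) ⊆ {0} := by
      intro z hz
      have hzre : z = z.re := hsa.mem_spectrum_eq_re hz
      have hzR : z.re ∈ spectrum ℝ (c * u * c) :=
        spectrum.of_algebraMap_mem ℂ (show ((z.re : ℝ) : ℂ) ∈ _ from hzre ▸ hz)
      have htnn : (0 : ℝ) ≤ z.re := spectrum_nonneg_of_nonneg hle hzR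
      rcases eq_or_lt_of_le htnn with h | h
      · simp only [Set.mem_singleton_iff]
        rw [hzre, ← h, Complex.ofReal_zero]
      · exfalso
        set t := z.re
        have htC : (t : ℂ) ∈ spectrum ℂ (c * u * c) := hzre ▸ hz
        have htne : (t : ℂ) ≠ 0 := by exact_mod_cast h.ne'
        have hmem : (t : ℂ) ∈ spectrum ℂ ((c * u) * c) \ {0} := ⟨htC, htne⟩
        rw [spectrum.nonzero_mul_comm] at hmem
        have : (t : ℂ) ∈ spectrum ℂ (c * c * u) := by
          have h3 := hmem.1
          rwa [← mul_assoc] at h3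
        exact hspec t h this
    -- a selfadjoint element with spectrum `⊆ {0}` is zero
    have hrad : spectralRadius ℂ (c * u * c) = 0 := by
      rw [spectralRadius]
      refine le_antisymm (iSup₂_le fun k hk => ?_) zero_le
      have : k = 0 := hsub hk
      simp [this]
    have hnorm : (‖c * u * c‖₊ : ENNReal) = 0 := by
      rw [← hsa.spectralRadius_eq_nnnorm, hrad]
    have : ‖c * u * c‖₊ = 0 := by exact_mod_cast hnorm
    simpa using (nnnorm_eq_zero.mp this)
  refine ⟨main, fun hanti => main fun t ht hmem => ?_⟩
  -- from anticommutation, `c * c * u = -(c * u * c)`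
  have hcu : c * u = -(u * c) := by
    have h := hanti
    rw [add_eq_zero_iff_eq_neg] at h
    rw [h, neg_neg]
  have h2 : c * c * u = -(c * u * c) := by
    calc c * c * u = c * (c * u) := by rw [mul_assoc]
      _ = c * (-(u * c)) := by rw [hcu]
      _ = -(c * u * c) := by rw [mul_neg, ← mul_assoc]
  rw [h2] at hmem
  rw [← spectrum.neg_eq, Set.mem_neg] at hmem
  have : ((-t : ℝ) : ℂ) ∈ spectrum ℂ (c * u * c) := by push_cast; exact hmem
  have hmemR : (-t : ℝ) ∈ spectrum ℝ (c * u * c) :=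
    spectrum.of_algebraMap_mem ℂ this
  have := spectrum_nonneg_of_nonneg hle hmemR
  linarith
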